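/- (Theorem 1, forward direction.) Let c > 0, let W : E → E be a linear isometry, and let b ∈ E with c·‖b‖² < 1. Then the feature transformation T(x) = b ⊕_c (W x) is an isometry of the Poincaré ball: for all x, y ∈ E with c·‖x‖² < 1 and c·‖y‖² < 1, d_c(T x, T y) = d_c(x, y). -/

import Mathlib

open scoped RealInnerProductSpace

variable {E : Type*} [NormedAddCommGroup E] [InnerProductSpace ℝ E] [FiniteDimensional ℝ E]

/-- Möbius addition on the Poincaré ball of curvature `-c`. -/
noncomputable def mobiusAdd (c : ℝ) (x y : E) : E :=
  (1 / (1 + 2 * c * ⟪x, y⟫ + c ^ 2 * ‖x‖ ^ 2 * ‖y‖ ^ 2)) •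
    ((1 + 2 * c * ⟪x, y⟫ + c * ‖y‖ ^ 2) • x + (1 - c * ‖x‖ ^ 2) • y)

/-- Inverse hyperbolic tangent. -/
noncomputable def artanh (t : ℝ) : ℝ := (1 / 2) * Real.log ((1 + t) / (1 - t))

/-- Hyperbolic distance on the Poincaré ball of curvature `-c`. -/
noncomputable def hypDist (c : ℝ) (x y : E) : ℝ :=
  (2 / Real.sqrt c) * artanh (Real.sqrt c * ‖mobiusAdd c (-x) y‖)

lemma D_pos (c : ℝ) (hc : 0 < c) (x y : E) (hx : c * ‖x‖ ^ 2 < 1) (hy : c * ‖y‖ ^ 2 < 1) :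
    0 < 1 + 2 * c * ⟪x, y⟫ + c ^ 2 * ‖x‖ ^ 2 * ‖y‖ ^ 2 := by
  have h1 : |⟪x, y⟫| ≤ ‖x‖ * ‖y‖ := abs_real_inner_le_norm x y
  have h2 : -(‖x‖ * ‖y‖) ≤ ⟪x, y⟫ := (abs_le.1 h1).1
  nlinarith [sq_nonneg (1 - c * ‖x‖ * ‖y‖), sq_nonneg (‖x‖ - ‖y‖),
    mul_pos (sub_pos.2 hx) (sub_pos.2 hy), norm_nonneg x, norm_nonneg y, hc.le]

lemma normsq_mobiusAdd_mul (c : ℝ) (x y : E)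
    (hD : 1 + 2 * c * ⟪x, y⟫ + c ^ 2 * ‖x‖ ^ 2 * ‖y‖ ^ 2 ≠ 0) :
    ‖mobiusAdd c x y‖ ^ 2 * (1 + 2 * c * ⟪x, y⟫ + c ^ 2 * ‖x‖ ^ 2 * ‖y‖ ^ 2)
      = ‖x + y‖ ^ 2 := by
  have hz : ‖(1 + 2 * c * ⟪x, y⟫ + c * ‖y‖ ^ 2) • x + (1 - c * ‖x‖ ^ 2) • y‖ ^ 2
      = (1 + 2 * c * ⟪x, y⟫ + c * ‖y‖ ^ 2) ^ 2 * ‖x‖ ^ 2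
        + 2 * ((1 + 2 * c * ⟪x, y⟫ + c * ‖y‖ ^ 2) * (1 - c * ‖x‖ ^ 2)) * ⟪x, y⟫
        + (1 - c * ‖x‖ ^ 2) ^ 2 * ‖y‖ ^ 2 := by
    rw [norm_add_sq_real, norm_smul, norm_smul, real_inner_smul_left, real_inner_smul_right,
      mul_pow, mul_pow, Real.norm_eq_abs, Real.norm_eq_abs, sq_abs, sq_abs]
    ring
  rw [mobiusAdd, norm_smul, mul_pow, Real.norm_eq_abs, sq_abs, hz, norm_add_sq_real]
  field_simp
  ring

lemma ball_mobiusAdd (c : ℝ) (hc : 0 < c) (x y : E)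
    (hx : c * ‖x‖ ^ 2 < 1) (hy : c * ‖y‖ ^ 2 < 1) :
    c * ‖mobiusAdd c x y‖ ^ 2 < 1 := by
  have hD := D_pos c hc x y hx hy
  have h := normsq_mobiusAdd_mul c x y hD.ne'
  have hxy : ‖x + y‖ ^ 2 = ‖x‖ ^ 2 + 2 * ⟪x, y⟫ + ‖y‖ ^ 2 := norm_add_sq_real x y
  nlinarith [mul_pos (sub_pos.2 hx) (sub_pos.2 hy)]

lemma key_norm_eq (c : ℝ) (hc : 0 < c) (b u v : E) (hb : c * ‖b‖ ^ 2 < 1)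
    (hu : c * ‖u‖ ^ 2 < 1) (hv : c * ‖v‖ ^ 2 < 1) :
    ‖mobiusAdd c (-(mobiusAdd c b u)) (mobiusAdd c b v)‖ = ‖mobiusAdd c (-u) v‖ := by
  set s := mobiusAdd c b u with hs
  set t := mobiusAdd c b v with ht
  have hDu : (0:ℝ) < 1 + 2 * c * ⟪b, u⟫ + c ^ 2 * ‖b‖ ^ 2 * ‖u‖ ^ 2 := D_pos c hc b u hb hu
  have hDv : (0:ℝ) < 1 + 2 * c * ⟪b, v⟫ + c ^ 2 * ‖b‖ ^ 2 * ‖v‖ ^ 2 := D_pos c hc b v hb hv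
  have hsB : c * ‖s‖ ^ 2 < 1 := ball_mobiusAdd c hc b u hb hu
  have htB : c * ‖t‖ ^ 2 < 1 := ball_mobiusAdd c hc b v hb hv
  have hsB' : c * ‖-s‖ ^ 2 < 1 := by rwa [norm_neg]
  have huB' : c * ‖-u‖ ^ 2 < 1 := by rwa [norm_neg]
  have hDst := D_pos c hc (-s) t hsB' htB
  have hDuv := D_pos c hc (-u) v huB' hv
  have hm1 := normsq_mobiusAdd_mul c (-s) t hDst.ne'
  have hm2 := normsq_mobiusAdd_mul c (-u) v hDuv.ne'
  -- scalar values
  have hss : ‖s‖ ^ 2 * (1 + 2 * c * ⟪b, u⟫ + c ^ 2 * ‖b‖ ^ 2 * ‖u‖ ^ 2)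
      = ‖b‖ ^ 2 + 2 * ⟪b, u⟫ + ‖u‖ ^ 2 := by
    rw [hs, normsq_mobiusAdd_mul c b u hDu.ne', norm_add_sq_real]
  have htt : ‖t‖ ^ 2 * (1 + 2 * c * ⟪b, v⟫ + c ^ 2 * ‖b‖ ^ 2 * ‖v‖ ^ 2)
      = ‖b‖ ^ 2 + 2 * ⟪b, v⟫ + ‖v‖ ^ 2 := by
    rw [ht, normsq_mobiusAdd_mul c b v hDv.ne', norm_add_sq_real]
  have hcomm1 : ⟪u, b⟫ = ⟪b, u⟫ := real_inner_comm b u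
  have hcomm2 : ⟪v, b⟫ = ⟪b, v⟫ := real_inner_comm b v
  have hst : ⟪s, t⟫ * ((1 + 2 * c * ⟪b, u⟫ + c ^ 2 * ‖b‖ ^ 2 * ‖u‖ ^ 2)
        * (1 + 2 * c * ⟪b, v⟫ + c ^ 2 * ‖b‖ ^ 2 * ‖v‖ ^ 2))
      = (1 + 2 * c * ⟪b, u⟫ + c * ‖u‖ ^ 2) * (1 + 2 * c * ⟪b, v⟫ + c * ‖v‖ ^ 2) * ‖b‖ ^ 2
        + (1 + 2 * c * ⟪b, u⟫ + c * ‖u‖ ^ 2) * (1 - c * ‖b‖ ^ 2) * ⟪b, v⟫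
        + (1 + 2 * c * ⟪b, v⟫ + c * ‖v‖ ^ 2) * (1 - c * ‖b‖ ^ 2) * ⟪b, u⟫
        + (1 - c * ‖b‖ ^ 2) ^ 2 * ⟪u, v⟫ := by
    rw [hs, ht, mobiusAdd, mobiusAdd]
    rw [real_inner_smul_left, real_inner_smul_right, inner_add_left, inner_add_right,
      inner_add_right, real_inner_smul_left, real_inner_smul_left, real_inner_smul_left,
      real_inner_smul_left, real_inner_smul_right, real_inner_smul_right,
      real_inner_smul_right, real_inner_smul_right, real_inner_self_eq_norm_sq]
    simp only [hcomm1, hcomm2]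
    field_simp
    ring
  -- the key scalar identity
  have e1 : ‖-s + t‖ ^ 2 = ‖s‖ ^ 2 - 2 * ⟪s, t⟫ + ‖t‖ ^ 2 := by
    rw [norm_add_sq_real, inner_neg_left, norm_neg]; ring
  have e2 : ‖-u + v‖ ^ 2 = ‖u‖ ^ 2 - 2 * ⟪u, v⟫ + ‖v‖ ^ 2 := by
    rw [norm_add_sq_real, inner_neg_left, norm_neg]; ring
  have key : ‖-s + t‖ ^ 2 * (1 + 2 * c * ⟪-u, v⟫ + c ^ 2 * ‖-u‖ ^ 2 * ‖v‖ ^ 2)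
      = ‖-u + v‖ ^ 2 * (1 + 2 * c * ⟪-s, t⟫ + c ^ 2 * ‖-s‖ ^ 2 * ‖t‖ ^ 2) := by
    rw [e1, e2, inner_neg_left, inner_neg_left, norm_neg, norm_neg]
    -- express everything over common denominators
    set β := ‖b‖ ^ 2
    set μ := ‖u‖ ^ 2
    set ν := ‖v‖ ^ 2
    set p := ⟪b, u⟫
    set q := ⟪b, v⟫
    set r := ⟪u, v⟫
    have hSS : ‖s‖ ^ 2 = (β + 2 * p + μ) / (1 + 2 * c * p + c ^ 2 * β * μ) :=
      (eq_div_iff hDu.ne').2 hss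
    have hTT : ‖t‖ ^ 2 = (β + 2 * q + ν) / (1 + 2 * c * q + c ^ 2 * β * ν) :=
      (eq_div_iff hDv.ne').2 htt
    have hST : ⟪s, t⟫ = ((1 + 2 * c * p + c * μ) * (1 + 2 * c * q + c * ν) * β
        + (1 + 2 * c * p + c * μ) * (1 - c * β) * q
        + (1 + 2 * c * q + c * ν) * (1 - c * β) * p
        + (1 - c * β) ^ 2 * r)
        / ((1 + 2 * c * p + c ^ 2 * β * μ) * (1 + 2 * c * q + c ^ 2 * β * ν)) :=
      (eq_div_iff (mul_ne_zero hDu.ne' hDv.ne')).2 hst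
    rw [hSS, hTT, hST]
    have hDu' := hDu.ne'
    have hDv' := hDv.ne'
    generalize hD1 : 1 + 2 * c * p + c ^ 2 * β * μ = D1 at *
    generalize hD2 : 1 + 2 * c * q + c ^ 2 * β * ν = D2 at *
    field_simp
    subst hD1 hD2
    ring
  -- conclude equality of norms
  have hsq : ‖mobiusAdd c (-s) t‖ ^ 2 = ‖mobiusAdd c (-u) v‖ ^ 2 := by
    have h1 : ‖mobiusAdd c (-s) t‖ ^ 2
        = ‖-s + t‖ ^ 2 / (1 + 2 * c * ⟪-s, t⟫ + c ^ 2 * ‖-s‖ ^ 2 * ‖t‖ ^ 2) :=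
      (eq_div_iff hDst.ne').2 hm1
    have h2 : ‖mobiusAdd c (-u) v‖ ^ 2
        = ‖-u + v‖ ^ 2 / (1 + 2 * c * ⟪-u, v⟫ + c ^ 2 * ‖-u‖ ^ 2 * ‖v‖ ^ 2) :=
      (eq_div_iff hDuv.ne').2 hm2
    rw [h1, h2, div_eq_div_iff hDst.ne' hDuv.ne']
    exact key
  calc ‖mobiusAdd c (-s) t‖ = Real.sqrt (‖mobiusAdd c (-s) t‖ ^ 2) :=
        (Real.sqrt_sq (norm_nonneg _)).symm
    _ = Real.sqrt (‖mobiusAdd c (-u) v‖ ^ 2) := by rw [hsq]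
    _ = ‖mobiusAdd c (-u) v‖ := Real.sqrt_sq (norm_nonneg _)

theorem featureTransformation_isometry (c : ℝ) (hc : 0 < c)
    (W : E →ₗᵢ[ℝ] E) (b : E) (hb : c * ‖b‖ ^ 2 < 1) (x y : E)
    (hx : c * ‖x‖ ^ 2 < 1) (hy : c * ‖y‖ ^ 2 < 1) :
    hypDist c (mobiusAdd c b (W x)) (mobiusAdd c b (W y)) = hypDist c x y := by
  have hWx : ‖W x‖ = ‖x‖ := W.norm_map x
  have hWy : ‖W y‖ = ‖y‖ := W.norm_map y
  have hWxy : ⟪W x, W y⟫ = ⟪x, y⟫ := W.inner_map_map x y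
  have hux : c * ‖W x‖ ^ 2 < 1 := by rwa [hWx]
  have huy : c * ‖W y‖ ^ 2 < 1 := by rwa [hWy]
  have h1 := key_norm_eq c hc b (W x) (W y) hb hux huy
  have h2 : ‖mobiusAdd c (-(W x)) (W y)‖ = ‖mobiusAdd c (-x) y‖ := by
    rw [show (-(W x)) = W (-x) by simp, show mobiusAdd c (W (-x)) (W y)
        = (1 / (1 + 2 * c * ⟪-x, y⟫ + c ^ 2 * ‖-x‖ ^ 2 * ‖y‖ ^ 2)) •
          ((1 + 2 * c * ⟪-x, y⟫ + c * ‖y‖ ^ 2) • W (-x) + (1 - c * ‖-x‖ ^ 2) • W y) by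
        rw [mobiusAdd, W.inner_map_map, W.norm_map, W.norm_map]]
    rw [mobiusAdd]
    rw [norm_smul, norm_smul]
    congr 1
    rw [← W.map_smul, ← W.map_smul, ← W.map_add, W.norm_map]
  rw [hypDist, hypDist, h1, h2]
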